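/- arXiv:cs/0601089 — 6 statements merged into one kernel-verified Lean document; each statement's English description precedes it below -/
import Mathlib

section
/- (Representer Theorem) Let H_K be the RKHS induced by a positive semi-definite kernel K on X, let (x_1,y_1),...,(x_n,y_n) ∈ X × ℝ, and let λ > 0. Then the minimizer f_λ of f ↦ Σ_{i=1}^n (f(x_i) − y_i)² + λ‖f‖²_{H_K} over H_K exists and lies in the span of {K(·,x_1),...,K(·,x_n)}; i.e., there exists c ∈ ℝⁿ with f_λ = Σ_{i=1}^n c_i K(·,x_i). -/
/-- Representer theorem: the regularized kernel least-squares problem over the RKHS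
(modeled abstractly: `k x` is the kernel section `K(·,x)` and `f(x) = ⟪f, k x⟫`)
has a minimizer, and it lies in the span of the kernel sections at the data points. -/
theorem representer_theorem
    {X : Type*} {H : Type*} [NormedAddCommGroup H] [InnerProductSpace ℝ H] [CompleteSpace H]
    (k : X → H) (n : ℕ) (x : Fin n → X) (y : Fin n → ℝ) (lam : ℝ) (hlam : 0 < lam) :
    ∃ fl : H,
      (∀ g : H,
        (∑ i, ((inner ℝ fl (k (x i)) : ℝ) - y i) ^ 2 + lam * ‖fl‖ ^ 2)
          ≤ ∑ i, ((inner ℝ g (k (x i)) : ℝ) - y i) ^ 2 + lam * ‖g‖ ^ 2) ∧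
      ∃ c : Fin n → ℝ, fl = ∑ i, c i • k (x i) := by
  classical
  set V : Submodule ℝ H := Submodule.span ℝ (Set.range fun i => k (x i)) with hV
  haveI : FiniteDimensional ℝ V := FiniteDimensional.span_of_finite ℝ (Set.finite_range _)
  set J : H → ℝ := fun f => ∑ i, ((inner ℝ f (k (x i)) : ℝ) - y i) ^ 2 + lam * ‖f‖ ^ 2 with hJ
  have hcont : Continuous fun v : V => J (v : H) := by
    apply Continuous.add
    · exact continuous_finset_sum _ fun i _ =>
        ((continuous_subtype_val.inner continuous_const).sub continuous_const).pow 2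
    · exact continuous_const.mul (continuous_subtype_val.norm.pow 2)
  have hlb : ∀ f : H, lam * ‖f‖ ^ 2 ≤ J f := by
    intro f
    have : (0:ℝ) ≤ ∑ i, ((inner ℝ f (k (x i)) : ℝ) - y i) ^ 2 :=
      Finset.sum_nonneg fun i _ => sq_nonneg _
    simp only [hJ]; linarith
  have hcoer : Filter.Tendsto (fun v : V => J (v : H)) (Filter.cocompact V) Filter.atTop := by
    apply Filter.tendsto_atTop_mono (fun v : V => hlb (v : H))
    have h1 : Filter.Tendsto (fun v : V => ‖(v : H)‖) (Filter.cocompact V) Filter.atTop :=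
      tendsto_norm_cocompact_atTop (E := V)
    have h2 : Filter.Tendsto (fun t : ℝ => lam * t ^ 2) Filter.atTop Filter.atTop :=
      (Filter.tendsto_pow_atTop (by norm_num)).const_mul_atTop hlam
    exact h2.comp h1
  obtain ⟨v0, hv0⟩ := hcont.exists_forall_le hcoer
  refine ⟨(v0 : H), ?_, ?_⟩
  · intro g
    set p : H := (V.orthogonalProjectionOnto g : H) with hp
    have hpg : J p ≤ J g := by
      have hinner : ∀ i, (inner ℝ p (k (x i)) : ℝ) = inner ℝ g (k (x i)) := by
        intro i
        have hk : k (x i) ∈ V := Submodule.subset_span ⟨i, rfl⟩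
        have h0 : (inner ℝ (g - p) (k (x i)) : ℝ) = 0 :=
          (Submodule.mem_orthogonal' V _).1 (Submodule.sub_starProjection_mem_orthogonal g) _ hk
        have := inner_sub_left (𝕜 := ℝ) g p (k (x i))
        rw [h0] at this
        linarith
      have hnorm : ‖p‖ ^ 2 ≤ ‖g‖ ^ 2 := by
        have := Submodule.norm_sq_eq_add_norm_sq_projection g V
        have h2 : (0:ℝ) ≤ ‖Vᗮ.orthogonalProjectionOnto g‖ ^ 2 := sq_nonneg _
        simp only [hp]
        rw [this]
        simp only [← Submodule.coe_norm] at this ⊢; linarith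
      have hsum : ∑ i, ((inner ℝ p (k (x i)) : ℝ) - y i) ^ 2
          = ∑ i, ((inner ℝ g (k (x i)) : ℝ) - y i) ^ 2 :=
        Finset.sum_congr rfl fun i _ => by rw [hinner i]
      have hm := mul_le_mul_of_nonneg_left hnorm hlam.le
      simp only [hJ]
      rw [hsum]
      linarith
    exact le_trans (hv0 ⟨p, (V.orthogonalProjectionOnto g).2⟩) hpg
  · obtain ⟨c, hc⟩ := (Submodule.mem_span_range_iff_exists_fun ℝ).1 v0.2
    exact ⟨c, hc.symm⟩
end

section
/- (Lemma 1) Let λ_1,...,λ_m > 0 and let (z, f_{λ_1},...,f_{λ_m}) minimize ‖z − y‖² + Σ_{i=1}^m λ_i ‖f_i‖²_{H_K} subject to z_j = f_i(x_j) for all j ∈ {1,...,n} and all i ∈ {1,...,m}. Then f_{λ_1} = f_{λ_2} = ... = f_{λ_m}, and if Σ_i λ_i = λ then f_{λ_1} equals the minimizer f_λ of Σ_j (f(x_j) − y_j)² + λ‖f‖²_{H_K} over H_K. -/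
/-- Lemma 1: with full coupling constraints `z_j = f_i(x_j)` for all `j` and `i`, the
minimizer of `‖z − y‖² + Σ_i λ_i ‖f_i‖²` has all its function components equal; and if
`Σ_i λ_i = λ`, they equal the minimizer of the centralized regularized problem with
parameter `λ`.  (RKHS modeled abstractly: `f(x) = ⟪f, k x⟫`.) -/
theorem fully_coupled_minimizer_components_equal
    {X : Type*} {H : Type*} [NormedAddCommGroup H] [InnerProductSpace ℝ H] [CompleteSpace H]
    (k : X → H) (n m : ℕ) (x : Fin n → X) (y : Fin n → ℝ)
    (lam : Fin m → ℝ) (hlam : ∀ i, 0 < lam i)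
    (z : Fin n → ℝ) (F : Fin m → H)
    (hfeas : ∀ j : Fin n, ∀ i : Fin m, z j = (inner ℝ (F i) (k (x j)) : ℝ))
    (hmin : ∀ (z2 : Fin n → ℝ) (F2 : Fin m → H),
      (∀ j : Fin n, ∀ i : Fin m, z2 j = (inner ℝ (F2 i) (k (x j)) : ℝ)) →
      (∑ j, (z j - y j) ^ 2) + ∑ i, lam i * ‖F i‖ ^ 2
        ≤ (∑ j, (z2 j - y j) ^ 2) + ∑ i, lam i * ‖F2 i‖ ^ 2) :
    (∀ i i' : Fin m, F i = F i') ∧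
    (∀ flam : H,
      (∀ g : H,
        (∑ j, ((inner ℝ flam (k (x j)) : ℝ) - y j) ^ 2 + (∑ i, lam i) * ‖flam‖ ^ 2)
          ≤ ∑ j, ((inner ℝ g (k (x j)) : ℝ) - y j) ^ 2 + (∑ i, lam i) * ‖g‖ ^ 2) →
      ∀ i : Fin m, F i = flam) := by
  have part1 : ∀ i i' : Fin m, F i = F i' := by
    intro i i'
    by_contra hne
    have hii' : i ≠ i' := by rintro rfl; exact hne rfl
    have ha : 0 < lam i := hlam i
    have hb : 0 < lam i' := hlam i'
    set a := lam i with ha'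
    set b := lam i' with hb'
    set U := F i with hU
    set V := F i' with hV
    have hab : 0 < a + b := add_pos ha hb
    set g : H := (a + b)⁻¹ • (a • U + b • V) with hg
    -- the rescaled average
    have hsmulg : (a + b) • g = a • U + b • V := by
      rw [hg, smul_smul, mul_inv_cancel₀ hab.ne', one_smul]
    set F2 : Fin m → H := Function.update (Function.update F i g) i' g with hF2
    have hF2i : F2 i = g := by
      rw [hF2, Function.update_of_ne hii', Function.update_self]
    have hF2i' : F2 i' = g := by rw [hF2, Function.update_self]
    have hF2other : ∀ j, j ≠ i → j ≠ i' → F2 j = F j := by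
      intro j hj hj'
      rw [hF2, Function.update_of_ne hj', Function.update_of_ne hj]
    -- feasibility of the modified point
    have hfeas2 : ∀ j : Fin n, ∀ i'' : Fin m, z j = (inner ℝ (F2 i'') (k (x j)) : ℝ) := by
      intro j i''
      have hginner : (inner ℝ g (k (x j)) : ℝ) = z j := by
        rw [hg, real_inner_smul_left, inner_add_left, real_inner_smul_left,
          real_inner_smul_left, ← hfeas j i, ← hfeas j i']
        field_simp
      by_cases h1 : i'' = i
      · rw [h1, hF2i, hginner]
      · by_cases h2 : i'' = i'
        · rw [h2, hF2i', hginner]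
        · rw [hF2other i'' h1 h2]; exact hfeas j i''
    -- splitting the regularizer sum at i and i'
    have hi'mem : i' ∈ Finset.univ.erase i :=
      Finset.mem_erase.mpr ⟨hii'.symm, Finset.mem_univ i'⟩
    have split : ∀ h : Fin m → ℝ,
        ∑ j, h j = h i + h i' + ∑ j ∈ (Finset.univ.erase i).erase i', h j := by
      intro h
      rw [← Finset.sum_erase_add Finset.univ h (Finset.mem_univ i),
        ← Finset.sum_erase_add (Finset.univ.erase i) h hi'mem]
      ring
    have hrest : ∑ j ∈ (Finset.univ.erase i).erase i', lam j * ‖F2 j‖ ^ 2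
        = ∑ j ∈ (Finset.univ.erase i).erase i', lam j * ‖F j‖ ^ 2 := by
      refine Finset.sum_congr rfl ?_
      intro j hj
      have hj' : j ≠ i' := (Finset.mem_erase.mp hj).1
      have hjne : j ≠ i := (Finset.mem_erase.mp (Finset.mem_erase.mp hj).2).1
      rw [hF2other j hjne hj']
    -- strict convexity: the key inequality
    have hexp : (a + b) ^ 2 * ‖g‖ ^ 2
        = a ^ 2 * ‖U‖ ^ 2 + 2 * (a * b) * (inner ℝ U V : ℝ) + b ^ 2 * ‖V‖ ^ 2 := by
      have h1 : ‖(a + b) • g‖ ^ 2 = (a + b) ^ 2 * ‖g‖ ^ 2 := by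
        rw [norm_smul, mul_pow, Real.norm_eq_abs, sq_abs]
      rw [← h1, hsmulg, norm_add_sq_real, real_inner_smul_left, real_inner_smul_right,
        norm_smul, norm_smul, mul_pow, mul_pow, Real.norm_eq_abs, Real.norm_eq_abs,
        sq_abs, sq_abs]
      ring
    have hsubpos : (0 : ℝ) < ‖U - V‖ ^ 2 := by
      have : U - V ≠ 0 := sub_ne_zero.mpr hne
      exact pow_pos (norm_pos_iff.mpr this) 2
    have hsubexp : ‖U - V‖ ^ 2 = ‖U‖ ^ 2 - 2 * (inner ℝ U V : ℝ) + ‖V‖ ^ 2 :=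
      norm_sub_sq_real U V
    have hkey : a * ‖g‖ ^ 2 + b * ‖g‖ ^ 2 < a * ‖U‖ ^ 2 + b * ‖V‖ ^ 2 := by
      nlinarith [mul_pos ha hb, sq_nonneg (‖U‖ - ‖V‖), mul_pos hab hab]
    -- contradiction with minimality
    have hlt : (∑ j, (z j - y j) ^ 2) + ∑ i'', lam i'' * ‖F2 i''‖ ^ 2
        < (∑ j, (z j - y j) ^ 2) + ∑ i'', lam i'' * ‖F i''‖ ^ 2 := by
      rw [split (fun i'' => lam i'' * ‖F2 i''‖ ^ 2), split (fun i'' => lam i'' * ‖F i''‖ ^ 2)]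
      simp only [hF2i, hF2i', hrest]
      rw [← hU, ← hV, ← ha', ← hb']
      linarith
    exact absurd (hmin z F2 hfeas2) (not_le.mpr hlt)
  refine ⟨part1, ?_⟩
  intro flam hflam i
  set f := F i with hf
  have hz : ∀ j, z j = (inner ℝ f (k (x j)) : ℝ) := fun j => hfeas j i
  set lamS := ∑ i', lam i' with hlamS
  have hlamSpos : 0 < lamS :=
    Finset.sum_pos (fun i' _ => hlam i') ⟨i, Finset.mem_univ i⟩
  have hregF : ∑ i', lam i' * ‖F i'‖ ^ 2 = lamS * ‖f‖ ^ 2 := by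
    rw [hlamS, Finset.sum_mul]
    refine Finset.sum_congr rfl ?_
    intro i' _
    rw [part1 i' i]
  -- A ≤ B
  have step1 : (∑ j, ((inner ℝ f (k (x j)) : ℝ) - y j) ^ 2) + lamS * ‖f‖ ^ 2
      ≤ (∑ j, ((inner ℝ flam (k (x j)) : ℝ) - y j) ^ 2) + lamS * ‖flam‖ ^ 2 := by
    have := hmin (fun j => (inner ℝ flam (k (x j)) : ℝ)) (fun _ => flam)
      (fun j i'' => rfl)
    rw [hregF] at this
    have hsum : ∑ i'' : Fin m, lam i'' * ‖flam‖ ^ 2 = lamS * ‖flam‖ ^ 2 := by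
      rw [hlamS, Finset.sum_mul]
    rw [hsum] at this
    calc (∑ j, ((inner ℝ f (k (x j)) : ℝ) - y j) ^ 2) + lamS * ‖f‖ ^ 2
        = (∑ j, (z j - y j) ^ 2) + lamS * ‖f‖ ^ 2 := by
          congr 1
          exact Finset.sum_congr rfl fun j _ => by rw [hz j]
      _ ≤ _ := this
  have step2 : (∑ j, ((inner ℝ flam (k (x j)) : ℝ) - y j) ^ 2) + lamS * ‖flam‖ ^ 2
      ≤ (∑ j, ((inner ℝ f (k (x j)) : ℝ) - y j) ^ 2) + lamS * ‖f‖ ^ 2 := hflam f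
  -- midpoint argument
  by_contra hne
  have hne' : f ≠ flam := hne
  set hmid : H := (1 / 2 : ℝ) • (f + flam) with hhm
  have hmidnorm : ‖hmid‖ ^ 2 < (‖f‖ ^ 2 + ‖flam‖ ^ 2) / 2 := by
    have hpar := parallelogram_law_with_norm ℝ f flam
    have hsubpos : (0 : ℝ) < ‖f - flam‖ * ‖f - flam‖ := by
      have : f - flam ≠ 0 := sub_ne_zero.mpr hne'
      have h0 : 0 < ‖f - flam‖ := norm_pos_iff.mpr this
      exact mul_pos h0 h0
    have h1 : ‖hmid‖ ^ 2 = (1 / 4) * (‖f + flam‖ * ‖f + flam‖) := by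
      rw [hhm, norm_smul]
      simp [Real.norm_eq_abs]
      ring
    nlinarith
  have hmidsum : ∑ j, ((inner ℝ hmid (k (x j)) : ℝ) - y j) ^ 2
      ≤ (∑ j, (((inner ℝ f (k (x j)) : ℝ) - y j) ^ 2 + ((inner ℝ flam (k (x j)) : ℝ) - y j) ^ 2)) / 2 := by
    rw [Finset.sum_div]
    refine Finset.sum_le_sum ?_
    intro j _
    have hin : (inner ℝ hmid (k (x j)) : ℝ)
        = ((inner ℝ f (k (x j)) : ℝ) + (inner ℝ flam (k (x j)) : ℝ)) / 2 := by
      rw [hhm, real_inner_smul_left, inner_add_left]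
      ring
    rw [hin]
    nlinarith [sq_nonneg ((inner ℝ f (k (x j)) : ℝ) - (inner ℝ flam (k (x j)) : ℝ))]
  have hC : (∑ j, ((inner ℝ hmid (k (x j)) : ℝ) - y j) ^ 2) + lamS * ‖hmid‖ ^ 2
      < (∑ j, ((inner ℝ flam (k (x j)) : ℝ) - y j) ^ 2) + lamS * ‖flam‖ ^ 2 := by
    have hAB : (∑ j, ((inner ℝ f (k (x j)) : ℝ) - y j) ^ 2) + lamS * ‖f‖ ^ 2
        = (∑ j, ((inner ℝ flam (k (x j)) : ℝ) - y j) ^ 2) + lamS * ‖flam‖ ^ 2 :=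
      le_antisymm step1 step2
    have hsum2 : ∑ j, (((inner ℝ f (k (x j)) : ℝ) - y j) ^ 2 + ((inner ℝ flam (k (x j)) : ℝ) - y j) ^ 2)
        = (∑ j, ((inner ℝ f (k (x j)) : ℝ) - y j) ^ 2)
          + ∑ j, ((inner ℝ flam (k (x j)) : ℝ) - y j) ^ 2 := Finset.sum_add_distrib
    have hmul : lamS * ‖hmid‖ ^ 2 < lamS * ((‖f‖ ^ 2 + ‖flam‖ ^ 2) / 2) :=
      (mul_lt_mul_iff_right₀ hlamSpos).mpr hmidnorm
    rw [hsum2] at hmidsum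
    linarith
  exact absurd (hflam hmid) (not_le.mpr hC)
end

section
/- Given a feasible point v = (z, f_1, ..., f_m) ∈ ℝⁿ × H_K^m, the orthogonal projection (with respect to the weighted inner product ‖z‖² + Σ_k λ_k‖f_k‖²) of v onto the subspace C_i = {(z,f_1,...,f_m) : f_i(x_j) = z_j ∀ j ∈ S̄_i} is given by: f_k^* = f_k for k ≠ i; f_i^* = argmin_{f ∈ H_K} [Σ_{j ∈ S̄_i} (f(x_j) − z_j)² + λ_i‖f − f_i‖²_{H_K}]; z_j^* = z_j for j ∉ S̄_i; and z_j^* = f_i^*(x_j) for j ∈ S̄_i. -/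
/-- Closed form of the orthogonal projection (in the weighted norm
`‖z‖² + Σ_k λ_k ‖f_k‖²`) of a point `(z, f_1, …, f_m)` onto the subspace
`C_i = {(z, f_1, …, f_m) : f_i(x_j) = z_j ∀ j ∈ S̄_i}`: only the `i`-th function and the
coordinates in `S̄_i` change, via a local regularized least-squares fit.
(RKHS modeled abstractly: `f(x) = ⟪f, k x⟫`.) -/
theorem projection_onto_Ci_formula
    {X : Type*} {H : Type*} [NormedAddCommGroup H] [InnerProductSpace ℝ H] [CompleteSpace H]
    (k : X → H) (n m : ℕ) (x : Fin n → X)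
    (lam : Fin m → ℝ) (hlam : ∀ i, 0 < lam i)
    (Si : Finset (Fin n)) (i : Fin m)
    (z : Fin n → ℝ) (F : Fin m → H)
    (fstar : H)
    (hfstar : ∀ f : H,
      (∑ j ∈ Si, ((inner ℝ fstar (k (x j)) : ℝ) - z j) ^ 2 + lam i * ‖fstar - F i‖ ^ 2)
        ≤ ∑ j ∈ Si, ((inner ℝ f (k (x j)) : ℝ) - z j) ^ 2 + lam i * ‖f - F i‖ ^ 2)
    (zstar : Fin n → ℝ) (Fstar : Fin m → H)
    (hzstar : ∀ j : Fin n,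
      zstar j = if j ∈ Si then (inner ℝ fstar (k (x j)) : ℝ) else z j)
    (hFstar : ∀ i2 : Fin m, Fstar i2 = if i2 = i then fstar else F i2) :
    (∀ j ∈ Si, (inner ℝ (Fstar i) (k (x j)) : ℝ) = zstar j) ∧
    (∀ (w : Fin n → ℝ) (G : Fin m → H),
      (∀ j ∈ Si, (inner ℝ (G i) (k (x j)) : ℝ) = w j) →
      (∑ j, (zstar j - z j) ^ 2) + ∑ i2, lam i2 * ‖Fstar i2 - F i2‖ ^ 2
        ≤ (∑ j, (w j - z j) ^ 2) + ∑ i2, lam i2 * ‖G i2 - F i2‖ ^ 2) := by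
  have hFi : Fstar i = fstar := by simp [hFstar]
  constructor
  · intro j hj
    rw [hFi, hzstar]
    simp [hj]
  · intro w G hG
    have h1 : ∑ j, (zstar j - z j) ^ 2
        = ∑ j ∈ Si, ((inner ℝ fstar (k (x j)) : ℝ) - z j) ^ 2 := by
      rw [← Finset.sum_subset (Finset.subset_univ Si)
        (fun j _ hj => by rw [hzstar]; simp [hj])]
      exact Finset.sum_congr rfl fun j hj => by rw [hzstar]; simp [hj]
    have h2 : ∑ i2, lam i2 * ‖Fstar i2 - F i2‖ ^ 2 = lam i * ‖fstar - F i‖ ^ 2 := by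
      rw [Finset.sum_eq_single i]
      · rw [hFi]
      · intro i2 _ hne; rw [hFstar]; simp [hne]
      · intro h; exact absurd (Finset.mem_univ i) h
    have h3 : ∑ j ∈ Si, (w j - z j) ^ 2 ≤ ∑ j, (w j - z j) ^ 2 :=
      Finset.sum_le_sum_of_subset_of_nonneg (Finset.subset_univ Si)
        (fun j _ _ => sq_nonneg _)
    have h4 : lam i * ‖G i - F i‖ ^ 2 ≤ ∑ i2, lam i2 * ‖G i2 - F i2‖ ^ 2 :=
      Finset.single_le_sum (f := fun i2 => lam i2 * ‖G i2 - F i2‖ ^ 2)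
        (fun i2 _ => mul_nonneg (hlam i2).le (sq_nonneg _)) (Finset.mem_univ i)
    have hGw : ∑ j ∈ Si, ((inner ℝ (G i) (k (x j)) : ℝ) - z j) ^ 2
        = ∑ j ∈ Si, (w j - z j) ^ 2 :=
      Finset.sum_congr rfl fun j hj => by rw [hG j hj]
    calc (∑ j, (zstar j - z j) ^ 2) + ∑ i2, lam i2 * ‖Fstar i2 - F i2‖ ^ 2
        = ∑ j ∈ Si, ((inner ℝ fstar (k (x j)) : ℝ) - z j) ^ 2 + lam i * ‖fstar - F i‖ ^ 2 := by
          rw [h1, h2]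
      _ ≤ ∑ j ∈ Si, ((inner ℝ (G i) (k (x j)) : ℝ) - z j) ^ 2 + lam i * ‖G i - F i‖ ^ 2 :=
          hfstar (G i)
      _ = ∑ j ∈ Si, (w j - z j) ^ 2 + lam i * ‖G i - F i‖ ^ 2 := by rw [hGw]
      _ ≤ (∑ j, (w j - z j) ^ 2) + ∑ i2, lam i2 * ‖G i2 - F i2‖ ^ 2 :=
          add_le_add h3 h4
end

section
/- (Theorem 4, local representer property) Let (z, f_{λ_1},...,f_{λ_m}) be the solution of the relaxed program minimizing ‖z − y‖² + Σ_i λ_i‖f_i‖²_{H_K} subject to z_j = f_i(x_j) for all j ∈ S̄_i and each i. Then for every agent i there exist coefficients c ∈ ℝ^{|S̄_i|} such that f_{λ_i} = Σ_{j ∈ S̄_i} c_j K(·, x_j); i.e., each agent's optimal function lies in the span of the kernel sections of its locally accessible data only. -/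
/-- Theorem 4 (local representer property): in the relaxed program, each agent's optimal
function lies in the span of the kernel sections of its locally accessible data.
(RKHS modeled abstractly: `k x` is the kernel section `K(·,x)` and `f(x) = ⟪f, k x⟫`.) -/
theorem local_representer_property
    {X : Type*} {H : Type*} [NormedAddCommGroup H] [InnerProductSpace ℝ H] [CompleteSpace H]
    (k : X → H) (n m : ℕ) (x : Fin n → X) (y : Fin n → ℝ)
    (lam : Fin m → ℝ) (hlam : ∀ i, 0 < lam i)
    (Si : Fin m → Finset (Fin n))
    (z : Fin n → ℝ) (F : Fin m → H)
    (hfeas : ∀ i : Fin m, ∀ j ∈ Si i, z j = (inner ℝ (F i) (k (x j)) : ℝ))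
    (hmin : ∀ (z2 : Fin n → ℝ) (F2 : Fin m → H),
      (∀ i : Fin m, ∀ j ∈ Si i, z2 j = (inner ℝ (F2 i) (k (x j)) : ℝ)) →
      (∑ j, (z j - y j) ^ 2) + ∑ i, lam i * ‖F i‖ ^ 2
        ≤ (∑ j, (z2 j - y j) ^ 2) + ∑ i, lam i * ‖F2 i‖ ^ 2) :
    ∀ i : Fin m, ∃ c : Fin n → ℝ, F i = ∑ j ∈ Si i, c j • k (x j) := by
  classical
  intro i
  set V : Submodule ℝ H := Submodule.span ℝ (Set.range fun j : (Si i) => k (x j)) with hV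
  have hfd : FiniteDimensional ℝ V := FiniteDimensional.span_of_finite ℝ (Set.finite_range _)
  have hcomp : CompleteSpace V := FiniteDimensional.complete ℝ V
  set P : H := (V.orthogonalProjection (F i) : H) with hP
  have hPmem : P ∈ V := (V.orthogonalProjection (F i)).2
  have hQ : F i - P ∈ Vᗮ := Submodule.sub_starProjection_mem_orthogonal (K := V) (F i)
  have hkmem : ∀ j ∈ Si i, k (x j) ∈ V := fun j hj =>
    Submodule.subset_span ⟨⟨j, hj⟩, rfl⟩
  have hinner : ∀ j ∈ Si i, (inner ℝ (F i) (k (x j)) : ℝ) = inner ℝ P (k (x j)) := by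
    intro j hj
    have h0 : (inner ℝ (k (x j)) (F i - P) : ℝ) = 0 :=
      (Submodule.mem_orthogonal V _).1 hQ _ (hkmem j hj)
    have h1 : (inner ℝ (F i - P) (k (x j)) : ℝ) = 0 := by
      rw [real_inner_comm]; exact h0
    rw [inner_sub_left] at h1
    linarith
  have hpyth : ‖F i‖ ^ 2 = ‖P‖ ^ 2 + ‖F i - P‖ ^ 2 := by
    have h0 : (inner ℝ P (F i - P) : ℝ) = 0 :=
      (Submodule.mem_orthogonal V _).1 hQ _ hPmem
    have := norm_add_sq_real P (F i - P)
    simpa [h0] using this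
  -- compare with the competitor where F i is replaced by P
  set F2 : Fin m → H := Function.update F i P with hF2
  have hfeas2 : ∀ i' : Fin m, ∀ j ∈ Si i', z j = (inner ℝ (F2 i') (k (x j)) : ℝ) := by
    intro i' j hj
    by_cases h : i' = i
    · subst h
      rw [hF2, Function.update_self]
      rw [hfeas i' j hj, hinner j hj]
    · rw [hF2, Function.update_of_ne h]
      exact hfeas i' j hj
  have hle := hmin z F2 hfeas2
  have hsum : ∀ G : Fin m → H, ∑ i', lam i' * ‖G i'‖ ^ 2
      = lam i * ‖G i‖ ^ 2 + ∑ i' ∈ Finset.univ.erase i, lam i' * ‖G i'‖ ^ 2 :=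
    fun G => (Finset.add_sum_erase _ _ (Finset.mem_univ i)).symm
  have hsame : ∑ i' ∈ Finset.univ.erase i, lam i' * ‖F2 i'‖ ^ 2
      = ∑ i' ∈ Finset.univ.erase i, lam i' * ‖F i'‖ ^ 2 := by
    refine Finset.sum_congr rfl fun i' hi' => ?_
    rw [hF2, Function.update_of_ne (Finset.ne_of_mem_erase hi')]
  rw [hsum F, hsum F2, hsame] at hle
  have hF2i : F2 i = P := Function.update_self i P F
  rw [hF2i] at hle
  have hnle : ‖F i‖ ^ 2 ≤ ‖P‖ ^ 2 := by
    have := hlam i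
    nlinarith
  have hzero : F i - P = 0 := by
    have : ‖F i - P‖ ^ 2 ≤ 0 := by nlinarith
    have h2 : ‖F i - P‖ = 0 := by nlinarith [norm_nonneg (F i - P)]
    exact norm_eq_zero.mp h2
  have hFi : F i = P := by
    have := sub_eq_zero.mp hzero; exact this
  have hmemV : F i ∈ V := hFi ▸ hPmem
  rw [hV, Submodule.mem_span_range_iff_exists_fun] at hmemV
  obtain ⟨c, hc⟩ := hmemV
  refine ⟨fun j => if h : j ∈ Si i then c ⟨j, h⟩ else 0, ?_⟩
  rw [← hc]
  rw [← Finset.sum_attach (Si i) (fun j => (if h : j ∈ Si i then c ⟨j, h⟩ else 0) • k (x j))]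
  refine Finset.sum_congr rfl fun j _ => ?_
  rw [dif_pos j.2]
end

section
/- (Theorem 3, convergence of the collaborative algorithm) Let (z, f_{λ_1},...,f_{λ_m}) be the solution of the relaxed program minimizing ‖z − y‖² + Σ_i λ_i‖f_i‖²_{H_K} subject to z_j = f_i(x_j) for j ∈ S̄_i. Let the algorithm generate iterates by cyclically, for i = 1,...,m, setting f_{i,t} = argmin_{f ∈ H_K}[Σ_{j∈S̄_i}(f(x_j) − z_j)² + λ_i‖f − f_{i,t−1}‖²] and updating z_j ← f_{i,t}(x_j) for j ∈ S̄_i, starting from f_{i,0} = 0 and z = y. Then lim_{T→∞} f_{i,T} = f_{λ_i} in H_K norm for every i. -/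
open Filter Topology

set_option linter.unusedSectionVars false
set_option maxHeartbeats 1000000

section Helpers
variable {H : Type*} [NormedAddCommGroup H] [InnerProductSpace ℝ H]
variable {n m : ℕ}

noncomputable def colB (lam : Fin m → ℝ) (w w' : (Fin n → ℝ) × (Fin m → H)) : ℝ :=
  ∑ j, w.1 j * w'.1 j + ∑ i, lam i * (inner ℝ (w.2 i) (w'.2 i) : ℝ)

noncomputable def colQ (lam : Fin m → ℝ) (w : (Fin n → ℝ) × (Fin m → H)) : ℝ :=
  ∑ j, (w.1 j)^2 + ∑ i, lam i * ‖w.2 i‖^2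

variable (lam : Fin m → ℝ)

lemma colB_self (w : (Fin n → ℝ) × (Fin m → H)) : colB lam w w = colQ lam w := by
  simp [colB, colQ, real_inner_self_eq_norm_sq, sq]

lemma colB_comm (a b : (Fin n → ℝ) × (Fin m → H)) : colB lam a b = colB lam b a := by
  simp [colB, real_inner_comm, mul_comm]

lemma colB_sub_left (a b u : (Fin n → ℝ) × (Fin m → H)) :
    colB lam (a - b) u = colB lam a u - colB lam b u := by
  simp only [colB, Prod.fst_sub, Prod.snd_sub, Pi.sub_apply, inner_sub_left, sub_mul, mul_sub,
    Finset.sum_sub_distrib]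
  ring

lemma colB_sub_right (a b u : (Fin n → ℝ) × (Fin m → H)) :
    colB lam u (a - b) = colB lam u a - colB lam u b := by
  rw [colB_comm, colB_sub_left, colB_comm lam a u, colB_comm lam b u]

lemma colB_add_left (a b u : (Fin n → ℝ) × (Fin m → H)) :
    colB lam (a + b) u = colB lam a u + colB lam b u := by
  simp only [colB, Prod.fst_add, Prod.snd_add, Pi.add_apply, inner_add_left, add_mul, mul_add,
    Finset.sum_add_distrib]
  ring

lemma colB_smul_left (t : ℝ) (a u : (Fin n → ℝ) × (Fin m → H)) :
    colB lam (t • a) u = t * colB lam a u := by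
  simp only [colB, Prod.smul_fst, Prod.smul_snd, Pi.smul_apply, smul_eq_mul,
    real_inner_smul_left, Finset.mul_sum, mul_add]
  ring_nf

lemma colB_add_right (a b u : (Fin n → ℝ) × (Fin m → H)) :
    colB lam u (a + b) = colB lam u a + colB lam u b := by
  rw [colB_comm, colB_add_left, colB_comm lam a u, colB_comm lam b u]

lemma colB_smul_right (t : ℝ) (a u : (Fin n → ℝ) × (Fin m → H)) :
    colB lam u (t • a) = t * colB lam u a := by
  rw [colB_comm, colB_smul_left, colB_comm lam a u]

lemma colQ_nonneg (hlam : ∀ i, 0 ≤ lam i) (w : (Fin n → ℝ) × (Fin m → H)) :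
    0 ≤ colQ lam w := by
  apply add_nonneg <;> apply Finset.sum_nonneg <;> intro i _
  · positivity
  · exact mul_nonneg (hlam i) (by positivity)

lemma colQ_sub_smul (t : ℝ) (x u : (Fin n → ℝ) × (Fin m → H)) :
    colQ lam (x - t • u) = colQ lam x - 2 * t * colB lam x u + t^2 * colQ lam u := by
  simp only [← colB_self, colB_sub_left, colB_sub_right, colB_smul_left, colB_smul_right]
  rw [colB_comm lam u x]
  ring

lemma colQ_add (a b : (Fin n → ℝ) × (Fin m → H)) :
    colQ lam (a + b) = colQ lam a + 2 * colB lam a b + colQ lam b := by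
  simp only [← colB_self, colB_add_left, colB_add_right]
  rw [colB_comm lam b a]
  ring

lemma colQ_fst_le (hlam : ∀ i, 0 ≤ lam i) (w : (Fin n → ℝ) × (Fin m → H)) (j : Fin n) :
    (w.1 j)^2 ≤ colQ lam w := by
  have h1 : (w.1 j)^2 ≤ ∑ j', (w.1 j')^2 :=
    Finset.single_le_sum (f := fun j' => (w.1 j')^2) (fun j' _ => by positivity) (Finset.mem_univ j)
  have h2 : (0:ℝ) ≤ ∑ i, lam i * ‖w.2 i‖^2 :=
    Finset.sum_nonneg fun i _ => mul_nonneg (hlam i) (by positivity)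
  unfold colQ; linarith

lemma colQ_snd_le (hlam : ∀ i, 0 ≤ lam i) (w : (Fin n → ℝ) × (Fin m → H)) (i : Fin m) :
    lam i * ‖w.2 i‖^2 ≤ colQ lam w := by
  have h1 : lam i * ‖w.2 i‖^2 ≤ ∑ i', lam i' * ‖w.2 i'‖^2 :=
    Finset.single_le_sum (f := fun i' => lam i' * ‖w.2 i'‖^2)
      (fun i' _ => mul_nonneg (hlam i') (by positivity)) (Finset.mem_univ i)
  have h2 : (0:ℝ) ≤ ∑ j, (w.1 j)^2 := Finset.sum_nonneg fun j _ => by positivity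
  calc lam i * ‖w.2 i‖^2 ≤ ∑ i', lam i' * ‖w.2 i'‖^2 := h1
    _ ≤ colQ lam w := by unfold colQ; linarith

/-- minimizer over a subspace implies B-orthogonality -/
lemma colB_eq_zero_of_min (hlam : ∀ i, 0 ≤ lam i)
    (P : ((Fin n → ℝ) × (Fin m → H)) → Prop)
    (hsub : ∀ (t : ℝ) u v, P u → P v → P (v - t • u))
    (a v : (Fin n → ℝ) × (Fin m → H)) (hv : P v)
    (hminv : ∀ u, P u → colQ lam (a - v) ≤ colQ lam (a - u))
    : ∀ u, P u → colB lam (a - v) u = 0 := by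
  intro u hu
  set c := colB lam (a - v) u with hc
  set q := colQ lam u with hq
  have hq0 : 0 ≤ q := colQ_nonneg lam hlam u
  have key : ∀ t : ℝ, 2 * t * c ≤ t^2 * q := by
    intro t
    have h1 : P (v - (-t) • u) := hsub (-t) u v hu hv
    have h2 := hminv _ h1
    have h3 : a - (v - (-t) • u) = (a - v) - t • u := by
      have : (-t) • u = -(t • u) := by simp [neg_smul]
      rw [this]; abel
    rw [h3, colQ_sub_smul] at h2
    nlinarith [h2]
  have hc2 : c^2 * (q + 2) ≤ 0 := by
    have := key (c / (q + 1))
    have hq1 : (0:ℝ) < q + 1 := by linarith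
    rw [div_pow] at this
    have h4 : 2 * (c / (q + 1)) * c = 2 * c^2 / (q+1) := by ring
    have h5 : c ^ 2 / (q + 1) ^ 2 * q = c^2 * q / (q+1)^2 := by ring
    rw [h4, h5] at this
    rw [div_le_div_iff₀ hq1 (by positivity)] at this
    nlinarith [this]
  have h6 : c^2 ≤ 0 := by nlinarith
  have h7 : c^2 = 0 := le_antisymm h6 (by positivity)
  exact pow_eq_zero_iff (by norm_num) |>.mp h7

end Helpers

/-- Theorem 3: convergence of the collaborative training algorithm.  The algorithm cycles
over the agents; at global step `s`, agent `i = s % m` computes a local regularized fit to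
the current message variables `Z s` (regularizing toward its previous function) and
updates the message variables on its local indices.  Then for every agent `i`, the iterate
after `T` full cycles converges in norm to the `i`-th component of the solution of the
relaxed program.  (RKHS modeled abstractly: `f(x) = ⟪f, k x⟫`.) -/
theorem collaborative_algorithm_converges
    {X : Type*} {H : Type*} [NormedAddCommGroup H] [InnerProductSpace ℝ H] [CompleteSpace H]
    (k : X → H) (n m : ℕ) (hm : 0 < m) (x : Fin n → X) (y : Fin n → ℝ)
    (lam : Fin m → ℝ) (hlam : ∀ i, 0 < lam i)
    (Si : Fin m → Finset (Fin n))
    -- the solution of the relaxed program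
    (zopt : Fin n → ℝ) (Fopt : Fin m → H)
    (hfeas : ∀ i : Fin m, ∀ j ∈ Si i, zopt j = (inner ℝ (Fopt i) (k (x j)) : ℝ))
    (hmin : ∀ (z2 : Fin n → ℝ) (F2 : Fin m → H),
      (∀ i : Fin m, ∀ j ∈ Si i, z2 j = (inner ℝ (F2 i) (k (x j)) : ℝ)) →
      (∑ j, (zopt j - y j) ^ 2) + ∑ i, lam i * ‖Fopt i‖ ^ 2
        ≤ (∑ j, (z2 j - y j) ^ 2) + ∑ i, lam i * ‖F2 i‖ ^ 2)
    -- the algorithm iterates: `Z s` are the message variables and `F s` the agents'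
    -- functions after `s` global steps
    (Z : ℕ → Fin n → ℝ) (F : ℕ → Fin m → H)
    (hZ0 : Z 0 = y) (hF0 : F 0 = 0)
    (hstep : ∀ s : ℕ, ∀ i : Fin m, i = ⟨s % m, Nat.mod_lt s hm⟩ →
      (∀ f : H,
        (∑ j ∈ Si i, ((inner ℝ (F (s + 1) i) (k (x j)) : ℝ) - Z s j) ^ 2
            + lam i * ‖F (s + 1) i - F s i‖ ^ 2)
          ≤ ∑ j ∈ Si i, ((inner ℝ f (k (x j)) : ℝ) - Z s j) ^ 2
            + lam i * ‖f - F s i‖ ^ 2) ∧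
      (∀ i2 : Fin m, i2 ≠ i → F (s + 1) i2 = F s i2) ∧
      (∀ j : Fin n,
        Z (s + 1) j = if j ∈ Si i then (inner ℝ (F (s + 1) i) (k (x j)) : ℝ) else Z s j)) :
    ∀ i : Fin m, Tendsto (fun T : ℕ => F (T * m) i) atTop (nhds (Fopt i)) := by
  classical
  have hlam' : ∀ i, 0 ≤ lam i := fun i => (hlam i).le
  set w : ℕ → (Fin n → ℝ) × (Fin m → H) := fun s => (Z s, F s) with hw
  set wopt : (Fin n → ℝ) × (Fin m → H) := (zopt, Fopt) with hwopt
  set idx : ℕ → Fin m := fun s => ⟨s % m, Nat.mod_lt s hm⟩ with hidx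
  set C : Fin m → ((Fin n → ℝ) × (Fin m → H)) → Prop :=
    fun i u => ∀ j ∈ Si i, u.1 j = (inner ℝ (u.2 i) (k (x j)) : ℝ) with hC
  -- subspace properties of C
  have hCsub : ∀ (i : Fin m) (t : ℝ) u v, C i u → C i v → C i (v - t • u) := by
    intro i t u v hu hv j hj
    simp only [Prod.fst_sub, Prod.snd_sub, Prod.smul_fst, Prod.smul_snd, Pi.sub_apply,
      Pi.smul_apply, smul_eq_mul, inner_sub_left, real_inner_smul_left]
    rw [hv j hj, hu j hj]
  have hCopt : ∀ i, C i wopt := fun i j hj => hfeas i j hj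
  have hCnext : ∀ s, C (idx s) (w (s+1)) := by
    intro s j hj
    have h3 := (hstep s (idx s) rfl).2.2 j
    simp only [hw] at *
    rw [h3, if_pos hj]
  -- step s is a Q-minimizer over C (idx s)
  have hQpair : ∀ (a b : Fin n → ℝ) (G G' : Fin m → H),
      colQ lam ((a, G) - (b, G')) = ∑ j, (a j - b j)^2 + ∑ i, lam i * ‖G i - G' i‖^2 :=
    fun a b G G' => rfl
  have hQmin : ∀ s, ∀ u, C (idx s) u → colQ lam (w s - w (s+1)) ≤ colQ lam (w s - u) := by
    intro s u hu
    obtain ⟨hmin1, hsame, hZup⟩ := hstep s (idx s) rfl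
    set i := idx s with hi
    set phi : H → ℝ := fun f =>
      ∑ j ∈ Si i, ((inner ℝ f (k (x j)) : ℝ) - Z s j)^2 + lam i * ‖f - F s i‖^2 with hphi
    have hQstep : colQ lam (w s - w (s+1)) = phi (F (s+1) i) := by
      rw [hw]
      rw [hQpair (Z s) (Z (s+1)) (F s) (F (s+1))]
      have h1 : ∑ j, (Z s j - Z (s+1) j)^2
          = ∑ j ∈ Si i, ((inner ℝ (F (s+1) i) (k (x j)) : ℝ) - Z s j)^2 := by
        rw [← Finset.sum_add_sum_compl (Si i)]
        have h2 : ∑ j ∈ (Si i)ᶜ, (Z s j - Z (s+1) j)^2 = 0 := by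
          apply Finset.sum_eq_zero
          intro j hj
          rw [hZup j, if_neg (Finset.mem_compl.mp hj), sub_self]
          norm_num
        rw [h2, add_zero]
        apply Finset.sum_congr rfl
        intro j hj
        rw [hZup j, if_pos hj]
        ring
      have h3 : ∑ i2, lam i2 * ‖F s i2 - F (s+1) i2‖^2
          = lam i * ‖F (s+1) i - F s i‖^2 := by
        rw [Finset.sum_eq_single i]
        · rw [norm_sub_rev]
        · intro i2 _ hne
          rw [hsame i2 hne, sub_self, norm_zero]
          norm_num
        · intro habs; exact absurd (Finset.mem_univ i) habs
      rw [h1, h3]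
    have hQcand : phi (u.2 i) ≤ colQ lam (w s - u) := by
      rw [hw]
      have hue : u = (u.1, u.2) := rfl
      rw [hue, hQpair (Z s) u.1 (F s) u.2]
      have h4 : ∑ j ∈ Si i, ((inner ℝ (u.2 i) (k (x j)) : ℝ) - Z s j)^2
          ≤ ∑ j, (Z s j - u.1 j)^2 := by
        have h5 : ∀ j ∈ Si i, ((inner ℝ (u.2 i) (k (x j)) : ℝ) - Z s j)^2
            = (Z s j - u.1 j)^2 := by
          intro j hj
          rw [hu j hj]
          ring
        rw [Finset.sum_congr rfl h5]
        exact Finset.sum_le_sum_of_subset_of_nonneg (Finset.subset_univ _)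
          (fun j _ _ => by positivity)
      have h6 : lam i * ‖u.2 i - F s i‖^2 ≤ ∑ i2, lam i2 * ‖F s i2 - u.2 i2‖^2 := by
        rw [norm_sub_rev]
        exact Finset.single_le_sum (f := fun i2 => lam i2 * ‖F s i2 - u.2 i2‖^2)
          (fun i2 _ => mul_nonneg (hlam' i2) (by positivity)) (Finset.mem_univ i)
      rw [hphi]
      dsimp only
      linarith
    calc colQ lam (w s - w (s+1)) = phi (F (s+1) i) := hQstep
      _ ≤ phi (u.2 i) := hmin1 (u.2 i)
      _ ≤ colQ lam (w s - u) := hQcand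
  -- orthogonality of the step increments
  have horth : ∀ s, ∀ u, C (idx s) u → colB lam (w s - w (s+1)) u = 0 := by
    intro s
    exact colB_eq_zero_of_min lam hlam' (C (idx s)) (hCsub (idx s)) (w s) (w (s+1))
      (hCnext s) (hQmin s)
  -- Pythagoras
  have hPyth : ∀ s p, C (idx s) p →
      colQ lam (w s - p) = colQ lam (w (s+1) - p) + colQ lam (w s - w (s+1)) := by
    intro s p hp
    have hsplit : w s - p = (w s - w (s+1)) + (w (s+1) - p) := by abel
    have hmem : C (idx s) (w (s+1) - p) := by
      have := hCsub (idx s) 1 p (w (s+1)) hp (hCnext s)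
      simpa using this
    have hB : colB lam (w s - w (s+1)) (w (s+1) - p) = 0 := horth s _ hmem
    rw [hsplit, colQ_add, hB]
    ring
  have hanti : ∀ p, (∀ i, C i p) → Antitone (fun s => colQ lam (w s - p)) := by
    intro p hp
    apply antitone_nat_of_succ_le
    intro s
    have := hPyth s p (hp (idx s))
    have h0 := colQ_nonneg lam hlam' (w s - w (s+1))
    linarith
  -- step sizes are summable
  set d : ℕ → ℝ := fun s => colQ lam (w s - w (s+1)) with hd
  have hdnn : ∀ s, 0 ≤ d s := fun s => colQ_nonneg lam hlam' _
  have htel : ∀ S, ∑ s ∈ Finset.range S, d s ≤ colQ lam (w 0 - wopt) := by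
    have key : ∀ S, ∑ s ∈ Finset.range S, d s + colQ lam (w S - wopt)
        = colQ lam (w 0 - wopt) := by
      intro S
      induction S with
      | zero => simp
      | succ S ih =>
        rw [Finset.sum_range_succ]
        have := hPyth S wopt (hCopt _)
        linarith
    intro S
    have h0 := colQ_nonneg lam hlam' (w S - wopt)
    linarith [key S]
  have hd0 : Tendsto d atTop (𝓝 0) :=
    (summable_of_sum_range_le hdnn htel).tendsto_atTop_zero
  -- squeeze helpers
  have hsq0 : ∀ (e g : ℕ → ℝ), (∀ T, (e T)^2 ≤ g T) → Tendsto g atTop (𝓝 0) →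
      Tendsto e atTop (𝓝 0) := by
    intro e g h hg
    apply squeeze_zero_norm (a := fun T => Real.sqrt (g T))
    · intro T
      rw [Real.norm_eq_abs, ← Real.sqrt_sq_eq_abs]
      exact Real.sqrt_le_sqrt (h T)
    · have : Tendsto Real.sqrt (𝓝 0) (𝓝 0) := by
        have := Real.continuous_sqrt.tendsto 0
        simpa using this
      exact this.comp hg
  have hvec0 : ∀ (e : ℕ → H) (g : ℕ → ℝ) (i : Fin m),
      (∀ T, lam i * ‖e T‖^2 ≤ g T) → Tendsto g atTop (𝓝 0) →
      Tendsto e atTop (𝓝 0) := by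
    intro e g i h hg
    apply squeeze_zero_norm (a := fun T => Real.sqrt (g T / lam i))
    · intro T
      rw [← Real.sqrt_sq (norm_nonneg (e T))]
      apply Real.sqrt_le_sqrt
      rw [le_div_iff₀ (hlam i)]
      calc ‖e T‖^2 * lam i = lam i * ‖e T‖^2 := by ring
        _ ≤ g T := h T
    · have h1 : Tendsto (fun T => g T / lam i) atTop (𝓝 0) := by
        simpa using hg.div_const (lam i)
      have h2 : Tendsto Real.sqrt (𝓝 0) (𝓝 0) := by
        have := Real.continuous_sqrt.tendsto 0
        simpa using this
      exact h2.comp h1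
  -- all iterates lie in the span of the kernel sections
  set V : Submodule ℝ H := Submodule.span ℝ (Set.range fun j : Fin n => k (x j)) with hVdef
  haveI : FiniteDimensional ℝ V := FiniteDimensional.span_of_finite ℝ (Set.finite_range _)
  have hkV : ∀ j, k (x j) ∈ V := fun j => Submodule.subset_span ⟨j, rfl⟩
  have hV : ∀ s i, F s i ∈ V := by
    intro s
    induction s with
    | zero =>
      intro i
      rw [hF0]
      exact Submodule.zero_mem V
    | succ s ih =>
      intro i
      by_cases hii : i = idx s
      · subst hii
        obtain ⟨hmin1, hsame, hZup⟩ := hstep s (idx s) rfl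
        set g : H := F s (idx s) with hg
        set f : H := F (s+1) (idx s) with hf
        set a : H := V.starProjection (f - g) with ha
        have haV : a ∈ V := V.starProjection_apply_mem _
        set b : H := f - g - a with hb
        have hbperp : b ∈ Vᗮ := V.sub_starProjection_mem_orthogonal (f - g)
        have hbz : ∀ j, (inner ℝ b (k (x j)) : ℝ) = 0 := by
          intro j
          rw [real_inner_comm]
          exact hbperp _ (hkV j)
        have hfb : g + a = f - b := by rw [hb]; abel
        have hinner : ∀ j, (inner ℝ (g + a) (k (x j)) : ℝ) = (inner ℝ f (k (x j)) : ℝ) := by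
          intro j
          rw [hfb, inner_sub_left, hbz j, sub_zero]
        have hab : f - g = a + b := by rw [hb]; abel
        have hnormsplit : ‖f - g‖^2 = ‖a‖^2 + ‖b‖^2 := by
          rw [hab, norm_add_sq_real,
            Submodule.inner_right_of_mem_orthogonal haV hbperp]
          ring
        have hcand := hmin1 (g + a)
        have hsums : ∑ j ∈ Si (idx s), ((inner ℝ (g + a) (k (x j)) : ℝ) - Z s j)^2
            = ∑ j ∈ Si (idx s), ((inner ℝ f (k (x j)) : ℝ) - Z s j)^2 :=
          Finset.sum_congr rfl fun j _ => by rw [hinner j]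
        have hnormcand : ‖g + a - g‖^2 = ‖a‖^2 := by
          rw [add_sub_cancel_left]
        rw [hsums, hnormcand] at hcand
        have hbsq : ‖b‖^2 ≤ 0 := by
          have hl := hlam (idx s)
          nlinarith [hcand, hnormsplit]
        have hbzero : b = 0 := by
          have : ‖b‖^2 = 0 := le_antisymm hbsq (by positivity)
          have : ‖b‖ = 0 := by
            nlinarith [norm_nonneg b]
          exact norm_eq_zero.mp this
        have hfga : f = g + a := by
          rw [hfb, hbzero, sub_zero]
        rw [hfga]
        exact Submodule.add_mem V (ih (idx s)) haV
      · rw [(hstep s (idx s) rfl).2.1 i hii]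
        exact ih i
  -- boundedness of the iterates
  have hQb : ∀ s, colQ lam (w s - wopt) ≤ colQ lam (w 0 - wopt) :=
    fun s => hanti wopt hCopt (Nat.zero_le s)
  set Q0 : ℝ := colQ lam (w 0 - wopt) with hQ0def
  have hQ0nn : 0 ≤ Q0 := colQ_nonneg lam hlam' _
  set CB : ℝ := (Real.sqrt Q0 + ∑ j', |zopt j'|)
      + ∑ i', (Real.sqrt (Q0 / lam i') + ‖Fopt i'‖) with hCBdef
  have habs_sum_nn : (0:ℝ) ≤ ∑ j', |zopt j'| := Finset.sum_nonneg fun j' _ => abs_nonneg _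
  have hsum2_nn : (0:ℝ) ≤ ∑ i', (Real.sqrt (Q0 / lam i') + ‖Fopt i'‖) :=
    Finset.sum_nonneg fun i' _ => add_nonneg (Real.sqrt_nonneg _) (norm_nonneg _)
  have hCBnn : 0 ≤ CB := by
    rw [hCBdef]
    have := Real.sqrt_nonneg Q0
    linarith
  have hZbd : ∀ s j, |Z s j| ≤ CB := by
    intro s j
    have h1 : (Z s j - zopt j)^2 ≤ Q0 :=
      le_trans (colQ_fst_le lam hlam' (w s - wopt) j) (hQb s)
    have h2 : |Z s j - zopt j| ≤ Real.sqrt Q0 := by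
      rw [← Real.sqrt_sq_eq_abs]
      exact Real.sqrt_le_sqrt h1
    have h3 : |zopt j| ≤ ∑ j', |zopt j'| :=
      Finset.single_le_sum (f := fun j' => |zopt j'|) (fun j' _ => abs_nonneg _)
        (Finset.mem_univ j)
    have h4 : |Z s j| ≤ |zopt j| + |Z s j - zopt j| := by
      have h4' := abs_add_le (zopt j) (Z s j - zopt j)
      have h4'' : zopt j + (Z s j - zopt j) = Z s j := by ring
      rwa [h4''] at h4'
    rw [hCBdef]
    linarith
  have hFbd : ∀ s i, ‖F s i‖ ≤ CB := by
    intro s i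
    have h1 : lam i * ‖F s i - Fopt i‖^2 ≤ Q0 :=
      le_trans (colQ_snd_le lam hlam' (w s - wopt) i) (hQb s)
    have h2 : ‖F s i - Fopt i‖ ≤ Real.sqrt (Q0 / lam i) := by
      rw [← Real.sqrt_sq (norm_nonneg _)]
      apply Real.sqrt_le_sqrt
      rw [le_div_iff₀ (hlam i)]
      nlinarith [h1]
    have h3 : Real.sqrt (Q0 / lam i) + ‖Fopt i‖
        ≤ ∑ i', (Real.sqrt (Q0 / lam i') + ‖Fopt i'‖) :=
      Finset.single_le_sum (f := fun i' => Real.sqrt (Q0 / lam i') + ‖Fopt i'‖)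
        (fun i' _ => add_nonneg (Real.sqrt_nonneg _) (norm_nonneg _)) (Finset.mem_univ i)
    have h4 : ‖F s i‖ ≤ ‖Fopt i‖ + ‖F s i - Fopt i‖ := by
      have h4' := norm_add_le (Fopt i) (F s i - Fopt i)
      have h4'' : Fopt i + (F s i - Fopt i) = F s i := by abel
      rwa [h4''] at h4'
    have h5 : (0:ℝ) ≤ Real.sqrt Q0 := Real.sqrt_nonneg _
    have h6 : ‖Fopt i‖ + ‖F s i - Fopt i‖ ≤ Real.sqrt (Q0 / lam i) + ‖Fopt i‖ := by linarith
    rw [hCBdef]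
    linarith
  -- extract a convergent subsequence in the finite-dimensional space
  set seq : ℕ → (Fin n → ℝ) × (Fin m → V) :=
    fun T => (Z (T*m), fun i => (⟨F (T*m) i, hV (T*m) i⟩ : V)) with hseq
  have hbdd : ∀ T, seq T ∈ Metric.closedBall (0 : (Fin n → ℝ) × (Fin m → V)) CB := by
    intro T
    rw [Metric.mem_closedBall, dist_zero_right, Prod.norm_def]
    apply max_le
    · rw [pi_norm_le_iff_of_nonneg hCBnn]
      intro j
      rw [Real.norm_eq_abs]
      exact hZbd (T*m) j
    · rw [pi_norm_le_iff_of_nonneg hCBnn]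
      intro i
      show ‖(⟨F (T*m) i, hV (T*m) i⟩ : V)‖ ≤ CB
      have : ‖(⟨F (T*m) i, hV (T*m) i⟩ : V)‖ = ‖F (T*m) i‖ := rfl
      rw [this]
      exact hFbd (T*m) i
  obtain ⟨aLim, -, φ, hφmono, hφtend⟩ :=
    tendsto_subseq_of_bounded Metric.isBounded_closedBall hbdd
  set zinf : Fin n → ℝ := aLim.1 with hzinf
  set Finf : Fin m → H := fun i => (aLim.2 i : H) with hFinf
  have hz0 : ∀ j, Tendsto (fun T => Z (φ T * m) j) atTop (𝓝 (zinf j)) := by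
    intro j
    have hc : Continuous (fun p : (Fin n → ℝ) × (Fin m → V) => p.1 j) :=
      (continuous_apply j).comp continuous_fst
    exact (hc.tendsto aLim).comp hφtend
  have hf0 : ∀ i, Tendsto (fun T => F (φ T * m) i) atTop (𝓝 (Finf i)) := by
    intro i
    have hc : Continuous (fun p : (Fin n → ℝ) × (Fin m → V) => (p.2 i : H)) :=
      continuous_subtype_val.comp ((continuous_apply i).comp continuous_snd)
    exact (hc.tendsto aLim).comp hφtend
  -- the subsequence marches to infinity
  have hgtop : ∀ r : ℕ, Tendsto (fun T => φ T * m + r) atTop atTop := by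
    intro r
    apply tendsto_atTop_mono (f := fun T : ℕ => T)
    · intro T
      calc T ≤ φ T := hφmono.le_apply
        _ ≤ φ T * m := Nat.le_mul_of_pos_right _ hm
        _ ≤ φ T * m + r := Nat.le_add_right _ _
    · exact tendsto_id
  -- limits along shifted subsequences
  have hshift : ∀ r : ℕ,
      (∀ j, Tendsto (fun T => Z (φ T * m + r) j) atTop (𝓝 (zinf j))) ∧
      (∀ i, Tendsto (fun T => F (φ T * m + r) i) atTop (𝓝 (Finf i))) := by
    intro r
    induction r with
    | zero =>
      constructor
      · intro j; simpa using hz0 j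
      · intro i; simpa using hf0 i
    | succ r ih =>
      have hdshift : Tendsto (fun T => d (φ T * m + r)) atTop (𝓝 0) := hd0.comp (hgtop r)
      constructor
      · intro j
        have hdiff : Tendsto
            (fun T => Z (φ T * m + r + 1) j - Z (φ T * m + r) j) atTop (𝓝 0) := by
          apply hsq0 _ _ (fun T => ?_) hdshift
          have hb := colQ_fst_le lam hlam' (w (φ T * m + r) - w (φ T * m + r + 1)) j
          calc (Z (φ T * m + r + 1) j - Z (φ T * m + r) j)^2
              = (Z (φ T * m + r) j - Z (φ T * m + r + 1) j)^2 := by ring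
            _ ≤ d (φ T * m + r) := hb
        have hcomb := (ih.1 j).add hdiff
        have heq : (fun T => Z (φ T * m + r) j
              + (Z (φ T * m + r + 1) j - Z (φ T * m + r) j))
            = fun T => Z (φ T * m + (r+1)) j := by
          funext T
          have : φ T * m + (r + 1) = φ T * m + r + 1 := by omega
          rw [this]
          ring
        rw [heq] at hcomb
        simpa using hcomb
      · intro i
        have hdiff : Tendsto
            (fun T => F (φ T * m + r + 1) i - F (φ T * m + r) i) atTop (𝓝 0) := by
          apply hvec0 _ _ i (fun T => ?_) hdshift
          have hb := colQ_snd_le lam hlam' (w (φ T * m + r) - w (φ T * m + r + 1)) i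
          have hnr : ‖F (φ T * m + r + 1) i - F (φ T * m + r) i‖
              = ‖F (φ T * m + r) i - F (φ T * m + r + 1) i‖ := norm_sub_rev _ _
          rw [hnr]
          exact hb
        have hcomb := (ih.2 i).add hdiff
        have heq : (fun T => F (φ T * m + r) i
              + (F (φ T * m + r + 1) i - F (φ T * m + r) i))
            = fun T => F (φ T * m + (r+1)) i := by
          funext T
          have : φ T * m + (r + 1) = φ T * m + r + 1 := by omega
          rw [this]
          abel
        rw [heq] at hcomb
        simpa using hcomb
  -- the limit point satisfies all the constraints
  set winf : (Fin n → ℝ) × (Fin m → H) := (zinf, Finf) with hwinf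
  have hCinf : ∀ i, C i winf := by
    intro i j hj
    set r : ℕ := (i : ℕ) with hr
    have hidxr : ∀ T : ℕ, idx (φ T * m + r) = i := by
      intro T
      rw [hidx]
      apply Fin.ext
      show (φ T * m + r) % m = (i : ℕ)
      rw [add_comm, Nat.add_mul_mod_self_right]
      exact Nat.mod_eq_of_lt i.isLt
    have hrel : ∀ T : ℕ, Z (φ T * m + r + 1) j = (inner ℝ (F (φ T * m + r + 1) i) (k (x j)) : ℝ) := by
      intro T
      have hcn := hCnext (φ T * m + r)
      rw [hidxr T] at hcn
      exact hcn j hj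
    have h1 : Tendsto (fun T => Z (φ T * m + r + 1) j) atTop (𝓝 (zinf j)) := by
      have := (hshift (r+1)).1 j
      exact this
    have h2 : Tendsto (fun T => (inner ℝ (F (φ T * m + r + 1) i) (k (x j)) : ℝ)) atTop
        (𝓝 (inner ℝ (Finf i) (k (x j)) : ℝ)) := by
      have hF : Tendsto (fun T => F (φ T * m + r + 1) i) atTop (𝓝 (Finf i)) := by
        have := (hshift (r+1)).2 i
        exact this
      exact hF.inner tendsto_const_nhds
    have h1' : Tendsto (fun T => Z (φ T * m + r + 1) j) atTop
        (𝓝 (inner ℝ (Finf i) (k (x j)) : ℝ)) := by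
      have heq : (fun T => Z (φ T * m + r + 1) j)
          = fun T => (inner ℝ (F (φ T * m + r + 1) i) (k (x j)) : ℝ) := funext fun T => hrel T
      rw [heq]
      exact h2
    exact tendsto_nhds_unique h1 h1'
  -- convergence of the whole sequence to winf
  have hbsubseq : Tendsto (fun T => colQ lam (w (φ T * m) - winf)) atTop (𝓝 0) := by
    have h1 : ∀ j, Tendsto (fun T => (Z (φ T * m) j - zinf j)^2) atTop (𝓝 0) := by
      intro j
      have := ((hz0 j).sub_const (zinf j)).pow 2
      simpa using this
    have h2 : ∀ i, Tendsto (fun T => lam i * ‖F (φ T * m) i - Finf i‖^2) atTop (𝓝 0) := by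
      intro i
      have := ((((hf0 i).sub_const (Finf i)).norm).pow 2).const_mul (lam i)
      simpa using this
    have h3 := (tendsto_finset_sum Finset.univ (fun j (_ : j ∈ Finset.univ) => h1 j)).add
      (tendsto_finset_sum Finset.univ (fun i (_ : i ∈ Finset.univ) => h2 i))
    have heq : (fun T => colQ lam (w (φ T * m) - winf))
        = fun T => (∑ j, (Z (φ T * m) j - zinf j)^2)
            + ∑ i, lam i * ‖F (φ T * m) i - Finf i‖^2 :=
      funext fun T => hQpair (Z (φ T * m)) zinf (F (φ T * m)) Finf
    rw [heq]
    simpa using h3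
  have hb0 : Tendsto (fun s => colQ lam (w s - winf)) atTop (𝓝 0) := by
    have hbdd2 : BddBelow (Set.range fun s => colQ lam (w s - winf)) := by
      refine ⟨0, ?_⟩
      rintro v ⟨s, rfl⟩
      exact colQ_nonneg lam hlam' _
    have hlim := tendsto_atTop_ciInf (hanti winf hCinf) hbdd2
    have hcomp : Tendsto (fun T => colQ lam (w (φ T * m) - winf)) atTop
        (𝓝 (⨅ s, colQ lam (w s - winf))) := by
      have := hlim.comp (hgtop 0)
      exact this
    have hiz : (⨅ s, colQ lam (w s - winf)) = 0 := tendsto_nhds_unique hcomp hbsubseq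
    rwa [hiz] at hlim
  have hzfull : ∀ j, Tendsto (fun s => Z s j) atTop (𝓝 (zinf j)) := by
    intro j
    have hdiff : Tendsto (fun s => Z s j - zinf j) atTop (𝓝 0) := by
      apply hsq0 _ _ (fun s => ?_) hb0
      exact colQ_fst_le lam hlam' (w s - winf) j
    have := hdiff.add_const (zinf j)
    simpa using this
  have hffull : ∀ i, Tendsto (fun s => F s i) atTop (𝓝 (Finf i)) := by
    intro i
    have hdiff : Tendsto (fun s => F s i - Finf i) atTop (𝓝 0) := by
      apply hvec0 _ _ i (fun s => ?_) hb0
      exact colQ_snd_le lam hlam' (w s - winf) i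
    have := hdiff.add (tendsto_const_nhds (x := Finf i))
    simpa using this
  -- winf is the projection of w 0 on the intersection
  have horthD : ∀ u, (∀ i, C i u) → colB lam (w 0 - winf) u = 0 := by
    intro u hu
    have hs : ∀ s, colB lam (w 0 - w s) u = 0 := by
      intro s
      induction s with
      | zero =>
        rw [sub_self]
        simp [colB]
      | succ s ih =>
        have hdec : w 0 - w (s+1) = (w 0 - w s) + (w s - w (s+1)) := by abel
        rw [hdec, colB_add_left, ih, horth s u (hu (idx s)), add_zero]
    have hcont : Tendsto (fun s => colB lam (w 0 - w s) u) atTop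
        (𝓝 (colB lam (w 0 - winf) u)) := by
      have hBpair : ∀ s, colB lam (w 0 - w s) u
          = (∑ j, (Z 0 j - Z s j) * u.1 j)
            + ∑ i, lam i * (inner ℝ (F 0 i - F s i) (u.2 i) : ℝ) := fun s => rfl
      have h1 : ∀ j, Tendsto (fun s => (Z 0 j - Z s j) * u.1 j) atTop
          (𝓝 ((Z 0 j - zinf j) * u.1 j)) :=
        fun j => (tendsto_const_nhds.sub (hzfull j)).mul_const (u.1 j)
      have h2 : ∀ i, Tendsto (fun s => lam i * (inner ℝ (F 0 i - F s i) (u.2 i) : ℝ)) atTop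
          (𝓝 (lam i * (inner ℝ (F 0 i - Finf i) (u.2 i) : ℝ))) :=
        fun i => ((tendsto_const_nhds.sub (hffull i)).inner tendsto_const_nhds).const_mul (lam i)
      have h3 := (tendsto_finset_sum Finset.univ (fun j (_ : j ∈ Finset.univ) => h1 j)).add
        (tendsto_finset_sum Finset.univ (fun i (_ : i ∈ Finset.univ) => h2 i))
      have heq : (fun s => colB lam (w 0 - w s) u)
          = fun s => (∑ j, (Z 0 j - Z s j) * u.1 j)
              + ∑ i, lam i * (inner ℝ (F 0 i - F s i) (u.2 i) : ℝ) := funext hBpair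
      rw [heq]
      have hBlim : colB lam (w 0 - winf) u
          = (∑ j, (Z 0 j - zinf j) * u.1 j)
            + ∑ i, lam i * (inner ℝ (F 0 i - Finf i) (u.2 i) : ℝ) := rfl
      rw [hBlim]
      exact h3
    have hzero : Tendsto (fun s => colB lam (w 0 - w s) u) atTop (𝓝 0) := by
      simp only [hs]
      exact tendsto_const_nhds
    exact tendsto_nhds_unique hcont hzero
  -- wopt is also the projection of w 0 on the intersection
  have hoptQ : ∀ u, (∀ i, C i u) → colQ lam (w 0 - wopt) ≤ colQ lam (w 0 - u) := by
    intro u hu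
    have hfm := hmin u.1 u.2 (fun i j hj => hu i j hj)
    have hw0 : w 0 = ((y : Fin n → ℝ), (0 : Fin m → H)) := by
      rw [hw]
      simp only
      rw [hZ0, hF0]
    have e1 : colQ lam (w 0 - wopt)
        = (∑ j, (zopt j - y j)^2) + ∑ i, lam i * ‖Fopt i‖^2 := by
      rw [hw0, hwopt, hQpair y zopt 0 Fopt]
      congr 1
      · exact Finset.sum_congr rfl fun j _ => by ring
      · exact Finset.sum_congr rfl fun i _ => by
          rw [Pi.zero_apply, zero_sub, norm_neg]
    have e2 : colQ lam (w 0 - u)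
        = (∑ j, (u.1 j - y j)^2) + ∑ i, lam i * ‖u.2 i‖^2 := by
      have hue : u = (u.1, u.2) := rfl
      rw [hw0, hue, hQpair y u.1 0 u.2]
      congr 1
      · exact Finset.sum_congr rfl fun j _ => by ring
      · exact Finset.sum_congr rfl fun i _ => by
          rw [Pi.zero_apply, zero_sub, norm_neg]
    rw [e1, e2]
    exact hfm
  have horthopt : ∀ u, (∀ i, C i u) → colB lam (w 0 - wopt) u = 0 :=
    colB_eq_zero_of_min lam hlam' (fun u => ∀ i, C i u)
      (fun t u v hu hv i => hCsub i t u v (hu i) (hv i)) (w 0) wopt hCopt hoptQ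
  -- conclude winf = wopt on the function components
  set u0 : (Fin n → ℝ) × (Fin m → H) := winf - wopt with hu0def
  have hu0 : ∀ i, C i u0 := by
    intro i
    have := hCsub i 1 wopt winf (hCopt i) (hCinf i)
    simpa [hu0def] using this
  have hB1 : colB lam (w 0 - wopt) u0 = 0 := horthopt u0 hu0
  have hB2 : colB lam (w 0 - winf) u0 = 0 := horthD u0 hu0
  have hQu0 : colQ lam u0 = 0 := by
    have hdec : u0 = (w 0 - wopt) - (w 0 - winf) := by rw [hu0def]; abel
    rw [← colB_self]
    nth_rewrite 1 [hdec]
    rw [colB_sub_left, hB1, hB2, sub_zero]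
  have hFinfopt : ∀ i, Finf i = Fopt i := by
    intro i
    have h1 : lam i * ‖u0.2 i‖^2 ≤ 0 := by
      rw [← hQu0]
      exact colQ_snd_le lam hlam' u0 i
    have h2 : ‖u0.2 i‖^2 ≤ 0 := by
      have := hlam i
      nlinarith [h1]
    have h3 : u0.2 i = 0 := by
      have h4 : ‖u0.2 i‖ = 0 := by nlinarith [norm_nonneg (u0.2 i), sq_nonneg (‖u0.2 i‖)]
      exact norm_eq_zero.mp h4
    have h5 : u0.2 i = Finf i - Fopt i := rfl
    rw [h5] at h3
    exact sub_eq_zero.mp h3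
  -- final conclusion
  intro i0
  have hgm : Tendsto (fun T : ℕ => T * m) atTop atTop := by
    apply tendsto_atTop_mono (f := fun T : ℕ => T)
    · intro T
      exact Nat.le_mul_of_pos_right _ hm
    · exact tendsto_id
  have h1 : Tendsto (fun T => colQ lam (w (T * m) - winf)) atTop (𝓝 0) := hb0.comp hgm
  have h2 : Tendsto (fun T => F (T * m) i0 - Finf i0) atTop (𝓝 0) := by
    apply hvec0 _ _ i0 (fun T => ?_) h1
    exact colQ_snd_le lam hlam' (w (T * m) - winf) i0
  have h3 := h2.add (tendsto_const_nhds (x := Finf i0))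
  rw [hFinfopt i0] at h3
  simpa using h3
end

section
/- In a Hilbert space H with closed convex sets C1,...,Cm having nonempty intersection C, the cyclic successive projection sequence (x_n) is bounded, and ‖x_n − x‖ converges for every x ∈ C; furthermore d(x_n, C_i) → 0 for each i. -/
open Filter Topology
open scoped RealInnerProductSpace

theorem aux_mod (m s i : ℕ) (hm : 0 < m) (hi : i < m) :
    (s + ((i + m - s % m) % m)) % m = i := by
  have hsm : s % m < m := Nat.mod_lt s hm
  set d := (i + m - s % m) % m with hdd
  have hb : d < m := Nat.mod_lt _ hm
  rw [Nat.add_mod, Nat.mod_eq_of_lt hb]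
  rcases le_or_gt (s % m) i with h | h
  · have h1 : i + m - s % m = (i - s % m) + 1 * m := by omega
    have h2 : d = i - s % m := by
      rw [hdd, h1, Nat.add_mul_mod_self_right, Nat.mod_eq_of_lt (by omega)]
    have h3 : s % m + d = i := by omega
    rw [h3, Nat.mod_eq_of_lt hi]
  · have h2 : d = i + m - s % m := Nat.mod_eq_of_lt (by omega)
    have h3 : s % m + d = i + 1 * m := by omega
    rw [h3, Nat.add_mul_mod_self_right, Nat.mod_eq_of_lt hi]

/-- Cyclic successive projections onto closed convex sets with nonempty intersection:
the iterates are bounded, `‖x_n − x‖` converges for every `x` in the intersection, and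
the distance of the iterates to each set `C_i` tends to `0`. -/
theorem cyclic_projections_bounded_distances
    {H : Type*} [NormedAddCommGroup H] [InnerProductSpace ℝ H] [CompleteSpace H]
    (m : ℕ) (hm : 0 < m) (C : Fin m → Set H)
    (hclosed : ∀ i, IsClosed (C i)) (hconv : ∀ i, Convex ℝ (C i))
    (hne : (⋂ i, C i).Nonempty)
    (P : Set H → H → H)
    (hP : ∀ S : Set H, IsClosed S → Convex ℝ S → S.Nonempty →
      ∀ v : H, P S v ∈ S ∧ ∀ w ∈ S, ‖P S v - v‖ ≤ ‖w - v‖)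
    (xhat : H) (x : ℕ → H) (hx0 : x 0 = xhat)
    (hxit : ∀ s : ℕ, x (s + 1) = P (C ⟨s % m, Nat.mod_lt s hm⟩) (x s)) :
    Bornology.IsBounded (Set.range x) ∧
    (∀ xc ∈ ⋂ i, C i, ∃ L : ℝ, Tendsto (fun s : ℕ => ‖x s - xc‖) atTop (nhds L)) ∧
    (∀ i : Fin m, Tendsto (fun s : ℕ => Metric.infDist (x s) (C i)) atTop (nhds 0)) := by
  obtain ⟨xc, hxc⟩ := hne
  -- the iterates land in the corresponding sets
  have hmemC : ∀ s : ℕ, x (s + 1) ∈ C ⟨s % m, Nat.mod_lt s hm⟩ := by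
    intro s
    rw [hxit s]
    exact (hP _ (hclosed _) (hconv _) ⟨xc, Set.mem_iInter.mp hxc _⟩ (x s)).1
  -- key Fejér inequality
  have key : ∀ (xc' : H), xc' ∈ ⋂ i, C i → ∀ s : ℕ,
      ‖x (s + 1) - xc'‖ ^ 2 + ‖x (s + 1) - x s‖ ^ 2 ≤ ‖x s - xc'‖ ^ 2 := by
    intro xc' hxc' s
    set i : Fin m := ⟨s % m, Nat.mod_lt s hm⟩ with hi
    have hxc'i : xc' ∈ C i := Set.mem_iInter.mp hxc' i
    obtain ⟨hmem, hmin⟩ := hP (C i) (hclosed i) (hconv i) ⟨xc', hxc'i⟩ (x s)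
    rw [hxit s]
    set p := P (C i) (x s) with hp
    haveI : Nonempty (C i) := ⟨⟨xc', hxc'i⟩⟩
    have hinf : ‖x s - p‖ = ⨅ w : (C i), ‖x s - (w : H)‖ := by
      apply le_antisymm
      · exact le_ciInf fun w => by
          simpa [norm_sub_rev] using hmin w w.2
      · exact ciInf_le ⟨0, by rintro r ⟨w, rfl⟩; exact norm_nonneg _⟩ (⟨p, hmem⟩ : C i)
    have hvar := (norm_eq_iInf_iff_real_inner_le_zero (hconv i) hmem).mp hinf
    have h1 : (inner ℝ (x s - p) (xc' - p) : ℝ) ≤ 0 := hvar xc' hxc'i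
    have hexp : ‖x s - xc'‖ ^ 2
        = ‖x s - p‖ ^ 2 + 2 * (inner ℝ (x s - p) (p - xc') : ℝ) + ‖p - xc'‖ ^ 2 := by
      have := norm_add_sq_real (x s - p) (p - xc')
      rwa [sub_add_sub_cancel] at this
    have h2 : (inner ℝ (x s - p) (p - xc') : ℝ) = -(inner ℝ (x s - p) (xc' - p) : ℝ) := by
      rw [← inner_neg_right, neg_sub]
    have h3 : ‖p - x s‖ = ‖x s - p‖ := norm_sub_rev _ _
    rw [h3]
    rw [h2] at hexp
    nlinarith [hexp, h1]
  -- monotonicity of distances to points of the intersection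
  have mono : ∀ (xc' : H), xc' ∈ ⋂ i, C i → ∀ s : ℕ,
      ‖x (s + 1) - xc'‖ ≤ ‖x s - xc'‖ := by
    intro xc' hxc' s
    have h := key xc' hxc' s
    nlinarith [norm_nonneg (x (s + 1) - xc'), norm_nonneg (x s - xc'),
      sq_nonneg (‖x (s + 1) - x s‖)]
  have anti : ∀ (xc' : H), xc' ∈ ⋂ i, C i →
      Antitone (fun s : ℕ => ‖x s - xc'‖) :=
    fun xc' hxc' => antitone_nat_of_succ_le (mono xc' hxc')
  -- convergence of ‖x s - xc'‖
  have conv : ∀ xc' ∈ ⋂ i, C i,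
      ∃ L : ℝ, Tendsto (fun s : ℕ => ‖x s - xc'‖) atTop (nhds L) := by
    intro xc' hxc'
    exact ⟨_, tendsto_atTop_ciInf (anti xc' hxc')
      ⟨0, by rintro r ⟨s, rfl⟩; exact norm_nonneg _⟩⟩
  refine ⟨?_, conv, ?_⟩
  · -- boundedness
    rw [isBounded_iff_forall_norm_le]
    refine ⟨‖x 0 - xc‖ + ‖xc‖, ?_⟩
    rintro y ⟨s, rfl⟩
    calc ‖x s‖ = ‖(x s - xc) + xc‖ := by rw [sub_add_cancel]
      _ ≤ ‖x s - xc‖ + ‖xc‖ := norm_add_le _ _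
      _ ≤ ‖x 0 - xc‖ + ‖xc‖ := by
          have := anti xc hxc (Nat.zero_le s)
          linarith
  · -- distances tend to 0
    obtain ⟨L, hL⟩ := conv xc hxc
    have hL2 : Tendsto (fun s : ℕ => ‖x s - xc‖ ^ 2) atTop (nhds (L ^ 2)) := hL.pow 2
    have hL2' : Tendsto (fun s : ℕ => ‖x (s + 1) - xc‖ ^ 2) atTop (nhds (L ^ 2)) :=
      hL2.comp (tendsto_add_atTop_nat 1)
    have hdiff : Tendsto (fun s : ℕ => ‖x s - xc‖ ^ 2 - ‖x (s + 1) - xc‖ ^ 2)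
        atTop (nhds 0) := by
      have := hL2.sub hL2'
      simpa using this
    have hstep2 : Tendsto (fun s : ℕ => ‖x (s + 1) - x s‖ ^ 2) atTop (nhds 0) := by
      refine tendsto_of_tendsto_of_tendsto_of_le_of_le tendsto_const_nhds hdiff
        (fun s => sq_nonneg _) (fun s => ?_)
      have := key xc hxc s
      linarith
    have hstep : Tendsto (fun s : ℕ => ‖x (s + 1) - x s‖) atTop (nhds 0) := by
      have := hstep2.sqrt
      simpa [Real.sqrt_sq (norm_nonneg _)] using this
    have hstepd : Tendsto (fun s : ℕ => dist (x s) (x (s + 1))) atTop (nhds 0) := by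
      simpa [dist_eq_norm, norm_sub_rev] using hstep
    intro i
    -- the dominating sequence
    have hD : Tendsto (fun s : ℕ => ∑ j ∈ Finset.range m,
        dist (x (s + j)) (x (s + j + 1))) atTop (nhds 0) := by
      have : Tendsto (fun s : ℕ => ∑ j ∈ Finset.range m,
          dist (x (s + j)) (x (s + j + 1))) atTop (nhds (∑ j ∈ Finset.range m, (0 : ℝ))) := by
        refine tendsto_finset_sum _ fun j _ => ?_
        exact (hstepd.comp (tendsto_add_atTop_nat j))
      simpa using this
    refine tendsto_of_tendsto_of_tendsto_of_le_of_le tendsto_const_nhds hD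
      (fun s => Metric.infDist_nonneg) (fun s => ?_)
    -- find t with s ≤ t < s + m and t % m = i
    set t : ℕ := s + ((i : ℕ) + m - s % m) % m with ht
    have hsm : s % m < m := Nat.mod_lt s hm
    have htmod : t % m = (i : ℕ) := aux_mod m s i hm i.2
    have hmemt : x (t + 1) ∈ C i := by
      have := hmemC t
      have : x (t + 1) ∈ C ⟨t % m, Nat.mod_lt t hm⟩ := this
      convert this using 2
      exact (Fin.ext htmod.symm)
    have hle1 : Metric.infDist (x s) (C i) ≤ dist (x s) (x (t + 1)) :=
      Metric.infDist_le_dist_of_mem hmemt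
    have hk : t + 1 - s ≤ m := by
      have : ((i : ℕ) + m - s % m) % m < m := Nat.mod_lt _ hm
      omega
    have hle2 : dist (x s) (x (t + 1)) ≤
        ∑ j ∈ Finset.range (t + 1 - s), dist (x (s + j)) (x (s + j + 1)) := by
      have h := dist_le_range_sum_dist (fun j => x (s + j)) (t + 1 - s)
      have hts : s + (t + 1 - s) = t + 1 := by omega
      simp only [Nat.add_zero, hts, ← Nat.add_assoc] at h
      exact h
    have hle3 : ∑ j ∈ Finset.range (t + 1 - s), dist (x (s + j)) (x (s + j + 1)) ≤
        ∑ j ∈ Finset.range m, dist (x (s + j)) (x (s + j + 1)) :=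
      Finset.sum_le_sum_of_subset_of_nonneg
        (Finset.range_subset_range.mpr hk) (fun j _ _ => dist_nonneg)
    linarith
end
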